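/- Consider the CRP model with a strictly increasing departure schedule d. Let m be a natural number and let M be a feasible sequence with flexibility level m. Suppose that at some time-step t the move of M is a relocation of a container c whose departure time has already passed, i.e., d(c) ≤ t. Then there exists a feasible sequence M' from the same initial configuration with flexibility level m+1 such that the relocation count of M' is strictly less than the relocation count of M and every container is retrieved in M' no later than in M (r'(n) ≤ r(n) for all n; in particular container c is retrieved at time t in M'). -/

import Mathlib

/-! ## The container relocation problem (CRP) model

A bay with `C` columns and at most `P` tiers, containing containers labeled `1,…,N`.
A configuration assigns to each column its stack of container labels; in our encoding the
*head* of the list is the *top* of the stack. -/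

/-- A bay configuration: for each column, the stack of container labels in it
(head of the list = top of the stack). -/
abbrev CRPConfig (C : ℕ) := Fin C → List ℕ

/-- A crane move: idle (no change), relocation of the top container of column `src`
onto column `dst`, or retrieval of the top container of column `src` out of the bay. -/
inductive CRPMove (C : ℕ) where
  | idle : CRPMove C
  | reloc (src dst : Fin C) : CRPMove C
  | retrieve (src : Fin C) : CRPMove C

/-- Whether a move is a relocation. -/
def CRPMove.isReloc {C : ℕ} : CRPMove C → Bool
  | .reloc _ _ => true
  | _ => false

/-- `CRPStep P b mv b'` holds when the move `mv` is applicable to configuration `b`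
(with height limit `P`) and transforms it into `b'`. -/
def CRPStep {C : ℕ} (P : ℕ) (b : CRPConfig C) : CRPMove C → CRPConfig C → Prop
  | .idle, b' => b' = b
  | .reloc i k, b' =>
      i ≠ k ∧ b i ≠ [] ∧ (b k).length < P ∧
      b' = fun j => if j = i then (b i).tail
                    else if j = k then (b i).head! :: b k else b j
  | .retrieve i, b' =>
      b i ≠ [] ∧ b' = fun j => if j = i then (b i).tail else b j

/-- A move sequence over horizon `T` for a `C × P` bay with containers `1,…,N`:
`conf 0` is the initial configuration, in which all `N` containers (and nothing else)
are present, each at most once, with stacks of height at most `P`; `mv t` is the move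
performed at time-step `t ∈ {1,…,T}`, and `conf t` the configuration after it. -/
structure CRPSeq (C P N T : ℕ) where
  conf : ℕ → CRPConfig C
  mv : ℕ → CRPMove C
  init_height : ∀ i, (conf 0 i).length ≤ P
  init_labels : ∀ i, ∀ c ∈ conf 0 i, 1 ≤ c ∧ c ≤ N
  init_nodup : ∀ i, (conf 0 i).Nodup
  init_disjoint : ∀ i j, i ≠ j → ∀ c, c ∈ conf 0 i → c ∉ conf 0 j
  init_all : ∀ n, 1 ≤ n → n ≤ N → ∃ i, n ∈ conf 0 i
  step : ∀ t, 1 ≤ t → t ≤ T → CRPStep P (conf (t - 1)) (mv t) (conf t)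

/-- The relocation count of a move sequence: the number of time-steps in `{1,…,T}` whose
move is a relocation. -/
def relocCount {C P N T : ℕ} (M : CRPSeq C P N T) : ℕ :=
  ((Finset.Icc 1 T).filter (fun t => (M.mv t).isReloc = true)).card

/-- Container `n` is retrieved at time-step `t` in the sequence `M`. -/
def RetrievesAt {C P N T : ℕ} (M : CRPSeq C P N T) (n t : ℕ) : Prop :=
  1 ≤ t ∧ t ≤ T ∧ ∃ i : Fin C, M.mv t = .retrieve i ∧ (M.conf (t - 1) i).head? = some n

/-- Container `n` is still in the bay at the beginning of time-step `t`. -/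
def InBay {C P N T : ℕ} (M : CRPSeq C P N T) (n t : ℕ) : Prop :=
  ∃ i : Fin C, n ∈ M.conf (t - 1) i

/-- Container `n` is available at time-step `t`: its departure time has come and it is
still in the bay at the beginning of step `t`. -/
def AvailableAt {C P N T : ℕ} (M : CRPSeq C P N T) (d : ℕ → ℕ) (n t : ℕ) : Prop :=
  1 ≤ n ∧ n ≤ N ∧ d n ≤ t ∧ InBay M n t

/-- `M` is a feasible sequence with flexibility level `m` for departure schedule `d`,
with retrieval times `r`: every container `n ∈ {1,…,N}` is retrieved exactly once, at
time `r n ≥ d n`, and for every `n` at most `(n−1)+m` containers are retrieved before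
container `n`.  Flexibility level `0` is FCFS-feasibility (containers retrieved exactly
in the order `1,…,N`). -/
structure CRPFeasible {C P N T : ℕ} (M : CRPSeq C P N T) (d : ℕ → ℕ) (m : ℕ)
    (r : ℕ → ℕ) : Prop where
  retrieves : ∀ n, 1 ≤ n → n ≤ N → RetrievesAt M n (r n)
  unique : ∀ n t, 1 ≤ n → n ≤ N → RetrievesAt M n t → t = r n
  onTime : ∀ n, 1 ≤ n → n ≤ N → d n ≤ r n
  flex : ∀ n, 1 ≤ n → n ≤ N →
    {n' | 1 ≤ n' ∧ n' ≤ N ∧ r n' < r n}.ncard ≤ (n - 1) + m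

/-- A strictly increasing departure schedule on `{1,…,N}` with `d 1 ≥ 1`. -/
def StrictSchedule (N : ℕ) (d : ℕ → ℕ) : Prop :=
  1 ≤ d 1 ∧ ∀ n n', 1 ≤ n → n' ≤ N → n < n' → d n < d n'

/-- The set of relocation counts of FCFS-feasible sequences (over all horizons `T`) from
the initial configuration `b0`, for departure schedule `d`. -/
def FCFSRelocSet (C P N : ℕ) (d : ℕ → ℕ) (b0 : CRPConfig C) : Set ℕ :=
  {R | ∃ T, ∃ M : CRPSeq C P N T, ∃ r,
        M.conf 0 = b0 ∧ CRPFeasible M d 0 r ∧ relocCount M = R}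


/-! ### Auxiliary machinery -/

def GoodBay {C : ℕ} (b : CRPConfig C) : Prop :=
  (∀ i, (b i).Nodup) ∧ ∀ i j, i ≠ j → ∀ x, x ∈ b i → x ∉ b j

lemma head?_eq_cons {l : List ℕ} {c : ℕ} (h : l.head? = some c) : ∃ l', l = c :: l' := by
  rcases l with _ | ⟨a, l'⟩
  · simp at h
  · simp at h; exact ⟨l', by rw [h]⟩

lemma exists_cons_of_ne_nil {l : List ℕ} (h : l ≠ []) : ∃ a l', l = a :: l' := by
  rcases l with _ | ⟨a, l'⟩
  · exact absurd rfl h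
  · exact ⟨a, l', rfl⟩

lemma goodBay_step {C P : ℕ} {b b' : CRPConfig C} {mv : CRPMove C}
    (h : CRPStep P b mv b') (hg : GoodBay b) : GoodBay b' := by
  obtain ⟨hnd, hdisj⟩ := hg
  cases mv with
  | idle => rw [show b' = b from h]; exact ⟨hnd, hdisj⟩
  | reloc i k =>
    obtain ⟨hik, hne, hlen, hb'⟩ := h
    have hb'j : ∀ j, b' j = if j = i then (b i).tail
        else if j = k then (b i).head! :: b k else b j := fun j => by rw [hb']
    obtain ⟨a, l, hl⟩ := exists_cons_of_ne_nil hne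
    have hai : a ∈ b i := by rw [hl]; exact List.mem_cons_self
    have hndl : (a :: l).Nodup := hl ▸ hnd i
    have hal : a ∉ l := (List.nodup_cons.mp hndl).1
    have hsub : ∀ j x, x ∈ b' j → x ∈ b j ∨ (j = k ∧ x = a) := by
      intro j x hx
      rw [hb'j j] at hx
      by_cases hji : j = i
      · subst hji; rw [if_pos rfl] at hx; exact Or.inl (List.mem_of_mem_tail hx)
      · by_cases hjk : j = k
        · rw [if_neg hji, if_pos hjk, hl] at hx
          rcases List.mem_cons.mp hx with h | h
          · exact Or.inr ⟨hjk, h⟩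
          · rw [hjk]; exact Or.inl h
        · rw [if_neg hji, if_neg hjk] at hx; exact Or.inl hx
    have hsubi : ∀ x, x ∈ b' i → x ∈ l := by
      intro x hx; rw [hb'j i, if_pos rfl, hl] at hx; exact hx
    constructor
    · intro j
      rw [hb'j j]
      by_cases hji : j = i
      · rw [if_pos hji, hl]; exact (List.nodup_cons.mp hndl).2
      · by_cases hjk : j = k
        · rw [if_neg hji, if_pos hjk, hl]
          simp only [List.head!]
          exact List.nodup_cons.mpr ⟨hdisj i k hik a hai, hnd k⟩
        · rw [if_neg hji, if_neg hjk]; exact hnd j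
    · intro j j' hjj' x hxj hxj'
      rcases hsub j x hxj with h1 | h1
      · rcases hsub j' x hxj' with h2 | h2
        · exact hdisj j j' hjj' x h1 h2
        · obtain ⟨hj'k, hxa⟩ := h2
          rw [hxa] at h1 hxj
          by_cases hji : j = i
          · exact hal (hsubi a (hji ▸ hxj))
          · exact hdisj i j (fun h => hji h.symm) a hai h1
      · obtain ⟨hjk, hxa⟩ := h1
        rw [hxa] at hxj'
        rcases hsub j' a hxj' with h2 | h2
        · by_cases hji : j' = i
          · exact hal (hsubi a (hji ▸ hxj'))
          · exact hdisj i j' (fun h => hji h.symm) a hai h2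
        · exact hjj' (hjk.trans h2.1.symm)
  | retrieve i =>
    obtain ⟨hne, hb'⟩ := h
    have hb'j : ∀ j, b' j = if j = i then (b i).tail else b j := fun j => by rw [hb']
    have hsub : ∀ j x, x ∈ b' j → x ∈ b j := by
      intro j x hx
      rw [hb'j j] at hx
      by_cases hji : j = i
      · subst hji; rw [if_pos rfl] at hx; exact List.mem_of_mem_tail hx
      · rwa [if_neg hji] at hx
    constructor
    · intro j
      rw [hb'j j]
      by_cases hji : j = i
      · rw [if_pos hji]; exact (hnd i).tail
      · rw [if_neg hji]; exact hnd j
    · intro j j' hjj' x hxj hxj'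
      exact hdisj j j' hjj' x (hsub j x hxj) (hsub j' x hxj')

lemma goodBay_conf {C P N T : ℕ} (M : CRPSeq C P N T) : ∀ s, s ≤ T → GoodBay (M.conf s) := by
  intro s
  induction s with
  | zero => exact fun _ => ⟨M.init_nodup, M.init_disjoint⟩
  | succ u ih =>
    intro h
    exact goodBay_step (by simpa using M.step (u+1) (by omega) h) (ih (by omega))

lemma mem_of_step {C P : ℕ} {b b' : CRPConfig C} {mv : CRPMove C}
    (h : CRPStep P b mv b') {x : ℕ} {j : Fin C} (hx : x ∈ b' j) : ∃ i, x ∈ b i := by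
  cases mv with
  | idle => exact ⟨j, h ▸ hx⟩
  | reloc i k =>
    obtain ⟨hik, hne, hlen, hb'⟩ := h
    have hb'j : b' j = if j = i then (b i).tail
        else if j = k then (b i).head! :: b k else b j := by rw [hb']
    rw [hb'j] at hx
    by_cases hji : j = i
    · rw [if_pos hji] at hx; exact ⟨i, List.mem_of_mem_tail hx⟩
    · by_cases hjk : j = k
      · rw [if_neg hji, if_pos hjk] at hx
        obtain ⟨a, l, hl⟩ := exists_cons_of_ne_nil hne
        rcases List.mem_cons.mp hx with h | h
        · exact ⟨i, by rw [hl] at h ⊢; simp [h]⟩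
        · exact ⟨k, h⟩
      · rw [if_neg hji, if_neg hjk] at hx; exact ⟨j, hx⟩
  | retrieve i =>
    obtain ⟨hne, hb'⟩ := h
    have hb'j : b' j = if j = i then (b i).tail else b j := by rw [hb']
    rw [hb'j] at hx
    by_cases hji : j = i
    · rw [if_pos hji] at hx; exact ⟨i, List.mem_of_mem_tail hx⟩
    · rw [if_neg hji] at hx; exact ⟨j, hx⟩

lemma retrieved_gone {C P N T : ℕ} (M : CRPSeq C P N T) {n s : ℕ} (h : RetrievesAt M n s) :
    ∀ u, s ≤ u → u ≤ T → ∀ j, n ∉ M.conf u j := by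
  obtain ⟨hs1, hsT, i, hmv, hhd⟩ := h
  have hstep := M.step s hs1 hsT
  rw [hmv] at hstep
  obtain ⟨hne, hconf⟩ := hstep
  obtain ⟨l, hl⟩ := head?_eq_cons hhd
  have hgood := goodBay_conf M (s-1) (le_trans (Nat.sub_le s 1) hsT)
  have base : ∀ j, n ∉ M.conf s j := by
    intro j hj
    have hcj : M.conf s j = if j = i then (M.conf (s-1) i).tail else M.conf (s-1) j := by
      rw [hconf]
    rw [hcj] at hj
    by_cases hji : j = i
    · rw [if_pos hji, hl] at hj
      exact (List.nodup_cons.mp (hl ▸ hgood.1 i)).1 hj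
    · rw [if_neg hji] at hj
      exact hgood.2 i j (fun h => hji h.symm) n (by rw [hl]; exact List.mem_cons_self) hj
  intro u hu
  induction u, hu using Nat.le_induction with
  | base => exact fun _ => base
  | succ u hu ih =>
    intro huT j hj
    obtain ⟨i', hi'⟩ := mem_of_step (by simpa using M.step (u+1) (by omega) huT) hj
    exact ih (by omega) i' hi'

/-- The move at step `s` in `M` acts on container `c` (i.e. `c` is the head of the
source column). -/
def Cmove {C P N T : ℕ} (M : CRPSeq C P N T) (c s : ℕ) : Prop :=
  ∃ i : Fin C, ((∃ k, M.mv s = CRPMove.reloc i k) ∨ M.mv s = CRPMove.retrieve i) ∧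
    (M.conf (s-1) i).head? = some c

/-- The modified configuration sequence: before time `t` unchanged, from time `t`
onwards container `c` is erased. -/
def newConf {C P N T : ℕ} (M : CRPSeq C P N T) (t c : ℕ) : ℕ → CRPConfig C :=
  fun s => if s < t then M.conf s else fun i => (M.conf s i).erase c

open Classical in
/-- The modified move sequence: before `t` unchanged, at `t` retrieve `c` from `i₀`,
after `t` every move acting on `c` becomes idle. -/
noncomputable def newMv {C P N T : ℕ} (M : CRPSeq C P N T) (t c : ℕ) (i₀ : Fin C) :
    ℕ → CRPMove C :=
  fun s => if s < t then M.mv s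
    else if s = t then CRPMove.retrieve i₀
    else if Cmove M c s then CRPMove.idle else M.mv s

lemma newConf_lt {C P N T : ℕ} (M : CRPSeq C P N T) (t c s : ℕ) (hs : s < t) :
    newConf M t c s = M.conf s := by
  simp only [newConf]; rw [if_pos hs]

lemma newConf_ge {C P N T : ℕ} (M : CRPSeq C P N T) (t c s : ℕ) (hs : ¬ s < t) (i : Fin C) :
    newConf M t c s i = (M.conf s i).erase c := by
  simp only [newConf]; rw [if_neg hs]

lemma newMv_lt {C P N T : ℕ} (M : CRPSeq C P N T) (t c : ℕ) (i₀ : Fin C) (s : ℕ)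
    (hs : s < t) : newMv M t c i₀ s = M.mv s := by
  simp only [newMv]; rw [if_pos hs]

lemma newMv_t {C P N T : ℕ} (M : CRPSeq C P N T) (t c : ℕ) (i₀ : Fin C) :
    newMv M t c i₀ t = CRPMove.retrieve i₀ := by
  simp [newMv]

lemma newMv_gt_cm {C P N T : ℕ} (M : CRPSeq C P N T) (t c : ℕ) (i₀ : Fin C) (s : ℕ)
    (hs : t < s) (h : Cmove M c s) : newMv M t c i₀ s = CRPMove.idle := by
  simp only [newMv]
  rw [if_neg (by omega : ¬ s < t), if_neg (by omega : ¬ s = t), if_pos h]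

lemma newMv_gt {C P N T : ℕ} (M : CRPSeq C P N T) (t c : ℕ) (i₀ : Fin C) (s : ℕ)
    (hs : t < s) (h : ¬ Cmove M c s) : newMv M t c i₀ s = M.mv s := by
  simp only [newMv]
  rw [if_neg (by omega : ¬ s < t), if_neg (by omega : ¬ s = t), if_neg h]

/-- with a strictly increasing departure schedule `d`, let `m : ℕ` and let
`M` be a feasible sequence with flexibility level `m` (retrieval times `r`).  Suppose
that at some time-step `t ∈ {1,…,T}` the move of `M` is a relocation of a container
`c` (the top of the source column at the beginning of step `t`) whose departure time
has already passed, `d c ≤ t`.  Then there is a feasible sequence `M'` from the same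
initial configuration with flexibility level `m + 1` (retrieval times `r'`) such that
the relocation count of `M'` is strictly less than that of `M`, every container is
retrieved in `M'` no later than in `M` (`r' n ≤ r n` for all `n ∈ {1,…,N}`), and in
particular container `c` is retrieved at time `t` in `M'` (`r' c = t`). -/
theorem stmt8 (C P N : ℕ) (hN : 1 ≤ N) (d : ℕ → ℕ) (hd : StrictSchedule N d)
    (m : ℕ) (T : ℕ) (M : CRPSeq C P N T) (r : ℕ → ℕ) (hM : CRPFeasible M d m r)
    (t c : ℕ) (ht1 : 1 ≤ t) (htT : t ≤ T) (hc1 : 1 ≤ c) (hcN : c ≤ N)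
    (hreloc : ∃ i k : Fin C, M.mv t = CRPMove.reloc i k ∧
      (M.conf (t - 1) i).head? = some c)
    (hdc : d c ≤ t) :
    ∃ T', ∃ M' : CRPSeq C P N T', ∃ r',
      M'.conf 0 = M.conf 0 ∧ CRPFeasible M' d (m + 1) r' ∧
      relocCount M' < relocCount M ∧
      (∀ n, 1 ≤ n → n ≤ N → r' n ≤ r n) ∧
      r' c = t := by
  classical
  obtain ⟨i₀, k₀, hmv, hhd⟩ := hreloc
  have hstep_t := M.step t ht1 htT
  rw [hmv] at hstep_t
  obtain ⟨hik, hne, hlen, hconf_t⟩ := hstep_t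
  have hconf_tj : ∀ j, M.conf t j = if j = i₀ then (M.conf (t-1) i₀).tail
      else if j = k₀ then (M.conf (t-1) i₀).head! :: M.conf (t-1) k₀ else M.conf (t-1) j :=
    fun j => by rw [hconf_t]
  obtain ⟨rest, hrest⟩ := head?_eq_cons hhd
  have hgood : ∀ s, s ≤ T → GoodBay (M.conf s) := goodBay_conf M
  have hrc := hM.retrieves c hc1 hcN
  have htrc : t < r c := by
    rcases lt_trichotomy t (r c) with h | h | h
    · exact h
    · exfalso
      obtain ⟨_, _, i, hi, _⟩ := hrc
      rw [← h, hmv] at hi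
      cases hi
    · exfalso
      exact retrieved_gone M hrc (t-1) (by omega) (by omega) i₀
        (by rw [hrest]; exact List.mem_cons_self)
  have hcrest : c ∉ rest := (List.nodup_cons.mp (hrest ▸ (hgood (t-1) (by omega)).1 i₀)).1
  have hcout : ∀ j, j ≠ i₀ → c ∉ M.conf (t-1) j := fun j hj =>
    (hgood (t-1) (by omega)).2 i₀ j (fun h => hj h.symm) c
      (by rw [hrest]; exact List.mem_cons_self)
  -- the step property of the modified sequence
  have hstep' : ∀ s, 1 ≤ s → s ≤ T →
      CRPStep P (newConf M t c (s-1)) (newMv M t c i₀ s) (newConf M t c s) := by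
    intro s hs1 hsT
    by_cases hlt : s < t
    · rw [newConf_lt M t c (s-1) (by omega), newConf_lt M t c s hlt,
        newMv_lt M t c i₀ s hlt]
      exact M.step s hs1 hsT
    by_cases heq : s = t
    · subst heq
      rw [newConf_lt M s c (s-1) (by omega), newMv_t M s c i₀]
      refine ⟨hne, ?_⟩
      funext j
      show newConf M s c s j = if j = i₀ then (M.conf (s-1) i₀).tail else M.conf (s-1) j
      rw [newConf_ge M s c s (lt_irrefl s) j, hconf_tj j]
      by_cases hji : j = i₀
      · rw [if_pos hji, if_pos hji, hrest]
        simp [List.erase_of_not_mem hcrest]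
      · by_cases hjk : j = k₀
        · rw [if_neg hji, if_pos hjk, if_neg hji, hjk, hrest]
          rw [show ((c :: rest).head! : ℕ) = c from rfl, List.erase_cons_head]
        · rw [if_neg hji, if_neg hjk, if_neg hji]
          exact List.erase_of_not_mem (hcout j hji)
    · have hgt : t < s := by omega
      have e1 : ∀ j, newConf M t c (s-1) j = (M.conf (s-1) j).erase c :=
        newConf_ge M t c (s-1) (by omega)
      have e2 : ∀ j, newConf M t c s j = (M.conf s j).erase c :=
        newConf_ge M t c s (by omega)
      have hg : GoodBay (M.conf (s-1)) := hgood (s-1) (by omega)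
      have hstep_s := M.step s hs1 hsT
      by_cases hcmv : Cmove M c s
      · rw [newMv_gt_cm M t c i₀ s hgt hcmv]
        show newConf M t c s = newConf M t c (s-1)
        funext j
        rw [e1 j, e2 j]
        obtain ⟨i, hcase, hhead⟩ := hcmv
        obtain ⟨l, hl⟩ := head?_eq_cons hhead
        have hcl : c ∉ l := (List.nodup_cons.mp (hl ▸ hg.1 i)).1
        have hcother : ∀ j, j ≠ i → c ∉ M.conf (s-1) j := fun j hj =>
          hg.2 i j (fun h => hj h.symm) c (by rw [hl]; exact List.mem_cons_self)
        rcases hcase with ⟨k, hmvs⟩ | hmvs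
        · rw [hmvs] at hstep_s
          obtain ⟨hik', hne', hlen', hcs⟩ := hstep_s
          have hcsj : M.conf s j = if j = i then (M.conf (s-1) i).tail
              else if j = k then (M.conf (s-1) i).head! :: M.conf (s-1) k
              else M.conf (s-1) j := by rw [hcs]
          rw [hcsj]
          by_cases hji : j = i
          · rw [if_pos hji, hji, hl]
            simp [List.erase_of_not_mem hcl, List.erase_cons_head]
          · by_cases hjk : j = k
            · rw [if_neg hji, if_pos hjk, hjk, hl]
              have hck : c ∉ M.conf (s-1) k := hcother k (Ne.symm hik')
              rw [show ((c :: l).head! : ℕ) = c from rfl, List.erase_cons_head,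
                List.erase_of_not_mem hck]
            · rw [if_neg hji, if_neg hjk]
        · rw [hmvs] at hstep_s
          obtain ⟨hne', hcs⟩ := hstep_s
          have hcsj : M.conf s j = if j = i then (M.conf (s-1) i).tail
              else M.conf (s-1) j := by rw [hcs]
          rw [hcsj]
          by_cases hji : j = i
          · rw [if_pos hji, hji, hl]
            simp [List.erase_of_not_mem hcl, List.erase_cons_head]
          · rw [if_neg hji]
      · rw [newMv_gt M t c i₀ s hgt hcmv]
        cases hmvs : M.mv s with
        | idle =>
          rw [hmvs] at hstep_s
          show newConf M t c s = newConf M t c (s-1)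
          funext j
          rw [e1 j, e2 j, hstep_s]
        | reloc i k =>
          rw [hmvs] at hstep_s
          obtain ⟨hik', hne', hlen', hcs⟩ := hstep_s
          have hhead : (M.conf (s-1) i).head? ≠ some c := fun h =>
            hcmv ⟨i, Or.inl ⟨k, hmvs⟩, h⟩
          obtain ⟨a, l, hl⟩ := exists_cons_of_ne_nil hne'
          have hac : a ≠ c := fun h => hhead (by rw [hl, h]; rfl)
          have herase : (M.conf (s-1) i).erase c = a :: l.erase c := by
            rw [hl]; exact List.erase_cons_tail (by simp [hac])
          refine ⟨hik', ?_, ?_, ?_⟩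
          · rw [e1 i, herase]; simp
          · rw [e1 k]
            exact lt_of_le_of_lt ((M.conf (s-1) k).erase_sublist).length_le hlen'
          · funext j
            show newConf M t c s j = if j = i then (newConf M t c (s-1) i).tail
              else if j = k then (newConf M t c (s-1) i).head! :: newConf M t c (s-1) k
              else newConf M t c (s-1) j
            have hcsj : M.conf s j = if j = i then (M.conf (s-1) i).tail
                else if j = k then (M.conf (s-1) i).head! :: M.conf (s-1) k
                else M.conf (s-1) j := by rw [hcs]
            rw [e2 j, hcsj]
            by_cases hji : j = i
            · rw [if_pos hji, if_pos hji, e1 i, herase, hl]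
              rfl
            · by_cases hjk : j = k
              · rw [if_neg hji, if_pos hjk, if_neg hji, if_pos hjk, e1 i, e1 k, herase, hl]
                rw [show ((a :: l).head! : ℕ) = a from rfl,
                  show ((a :: l.erase c).head! : ℕ) = a from rfl]
                exact List.erase_cons_tail (by simp [hac])
              · rw [if_neg hji, if_neg hjk, if_neg hji, if_neg hjk, e1 j]
        | retrieve i =>
          rw [hmvs] at hstep_s
          obtain ⟨hne', hcs⟩ := hstep_s
          have hhead : (M.conf (s-1) i).head? ≠ some c := fun h =>
            hcmv ⟨i, Or.inr hmvs, h⟩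
          obtain ⟨a, l, hl⟩ := exists_cons_of_ne_nil hne'
          have hac : a ≠ c := fun h => hhead (by rw [hl, h]; rfl)
          have herase : (M.conf (s-1) i).erase c = a :: l.erase c := by
            rw [hl]; exact List.erase_cons_tail (by simp [hac])
          refine ⟨?_, ?_⟩
          · rw [e1 i, herase]; simp
          · funext j
            show newConf M t c s j = if j = i then (newConf M t c (s-1) i).tail
              else newConf M t c (s-1) j
            have hcsj : M.conf s j = if j = i then (M.conf (s-1) i).tail
                else M.conf (s-1) j := by rw [hcs]
            rw [e2 j, hcsj]
            by_cases hji : j = i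
            · rw [if_pos hji, if_pos hji, e1 i, herase, hl]
              rfl
            · rw [if_neg hji, if_neg hji, e1 j]
  -- initial-configuration facts
  have h0t : (0:ℕ) < t := by omega
  have hih : ∀ i, (newConf M t c 0 i).length ≤ P := by
    rw [newConf_lt M t c 0 h0t]; exact M.init_height
  have hil : ∀ i, ∀ x ∈ newConf M t c 0 i, 1 ≤ x ∧ x ≤ N := by
    rw [newConf_lt M t c 0 h0t]; exact M.init_labels
  have hind : ∀ i, (newConf M t c 0 i).Nodup := by
    rw [newConf_lt M t c 0 h0t]; exact M.init_nodup
  have hidj : ∀ i j, i ≠ j → ∀ x, x ∈ newConf M t c 0 i → x ∉ newConf M t c 0 j := by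
    rw [newConf_lt M t c 0 h0t]; exact M.init_disjoint
  have hia : ∀ n, 1 ≤ n → n ≤ N → ∃ i, n ∈ newConf M t c 0 i := by
    rw [newConf_lt M t c 0 h0t]; exact M.init_all
  refine ⟨T, ⟨newConf M t c, newMv M t c i₀, hih, hil, hind, hidj, hia, hstep'⟩,
    (fun n => if n = c then t else r n), ?_, ?_, ?_, ?_, ?_⟩
  · exact newConf_lt M t c 0 h0t
  · -- feasibility with flexibility m + 1
    refine ⟨?_, ?_, ?_, ?_⟩
    · -- retrieves
      intro n h1 h2
      by_cases hnc : n = c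
      · rw [if_pos hnc]
        refine ⟨ht1, htT, i₀, newMv_t M t c i₀, ?_⟩
        show (newConf M t c (t-1) i₀).head? = some n
        rw [newConf_lt M t c (t-1) (by omega), hnc]
        exact hhd
      · rw [if_neg hnc]
        obtain ⟨ha1, ha2, i, hi, hh⟩ := hM.retrieves n h1 h2
        have hrnt : r n ≠ t := fun h => by rw [h, hmv] at hi; cases hi
        by_cases hlt : r n < t
        · refine ⟨ha1, ha2, i, ?_, ?_⟩
          · show newMv M t c i₀ (r n) = CRPMove.retrieve i
            rw [newMv_lt M t c i₀ (r n) hlt]; exact hi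
          · show (newConf M t c (r n - 1) i).head? = some n
            rw [newConf_lt M t c (r n - 1) (by omega)]; exact hh
        · have hgt : t < r n := by omega
          have hncm : ¬ Cmove M c (r n) := by
            rintro ⟨i', hcase', hh'⟩
            rcases hcase' with ⟨k', hk'⟩ | hr'
            · rw [hi] at hk'; cases hk'
            · rw [hi] at hr'
              have : i = i' := CRPMove.retrieve.inj hr'
              rw [← this] at hh'
              rw [hh] at hh'
              exact hnc (Option.some.inj hh')
          refine ⟨ha1, ha2, i, ?_, ?_⟩
          · show newMv M t c i₀ (r n) = CRPMove.retrieve i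
            rw [newMv_gt M t c i₀ (r n) hgt hncm]; exact hi
          · show (newConf M t c (r n - 1) i).head? = some n
            rw [newConf_ge M t c (r n - 1) (by omega) i]
            obtain ⟨l, hl⟩ := head?_eq_cons hh
            rw [hl, List.erase_cons_tail (by simp [hnc])]
            rfl
    · -- unique
      intro n s h1 h2 hret
      obtain ⟨hs1, hsT, i, hi0, hh0⟩ := hret
      have hi : newMv M t c i₀ s = CRPMove.retrieve i := hi0
      have hh : (newConf M t c (s-1) i).head? = some n := hh0
      by_cases hlt : s < t
      · rw [newMv_lt M t c i₀ s hlt] at hi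
        rw [newConf_lt M t c (s-1) (by omega)] at hh
        have hs_eq := hM.unique n s h1 h2 ⟨hs1, hsT, i, hi, hh⟩
        by_cases hnc : n = c
        · exfalso; subst hnc; omega
        · rw [if_neg hnc]; exact hs_eq
      by_cases heq : s = t
      · rw [heq, newMv_t M t c i₀] at hi
        rw [heq] at hh
        rw [newConf_lt M t c (t-1) (by omega)] at hh
        have hii : i₀ = i := CRPMove.retrieve.inj hi
        rw [← hii] at hh
        rw [hhd] at hh
        have hnc : n = c := (Option.some.inj hh).symm
        rw [if_pos hnc]; exact heq
      · have hgt : t < s := by omega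
        have hncm : ¬ Cmove M c s := by
          intro hcmv
          rw [newMv_gt_cm M t c i₀ s hgt hcmv] at hi
          cases hi
        rw [newMv_gt M t c i₀ s hgt hncm] at hi
        rw [newConf_ge M t c (s-1) (by omega) i] at hh
        rcases hbl : M.conf (s-1) i with _ | ⟨a, l⟩
        · rw [hbl] at hh; simp at hh
        · have hac : a ≠ c := by
            intro h
            exact hncm ⟨i, Or.inr hi, by rw [hbl, h]; rfl⟩
          rw [hbl, List.erase_cons_tail (by simp [hac])] at hh
          have han : a = n := by simpa using hh
          have hret' : RetrievesAt M n s :=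
            ⟨hs1, hsT, i, hi, by rw [hbl, han]; rfl⟩
          have hseq := hM.unique n s h1 h2 hret'
          have hnc : n ≠ c := fun h => hac (han.trans h)
          rw [if_neg hnc]; exact hseq
    · -- onTime
      intro n h1 h2
      by_cases hnc : n = c
      · rw [if_pos hnc, hnc]; exact hdc
      · rw [if_neg hnc]; exact hM.onTime n h1 h2
    · -- flex
      intro n h1 h2
      show {n' | 1 ≤ n' ∧ n' ≤ N ∧ (if n' = c then t else r n') < (if n = c then t else r n)}.ncard
        ≤ (n - 1) + (m + 1)
      by_cases hnc : n = c
      · rw [if_pos hnc]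
        have hsub : {n' | 1 ≤ n' ∧ n' ≤ N ∧ (if n' = c then t else r n') < t}
            ⊆ {n' | 1 ≤ n' ∧ n' ≤ N ∧ r n' < r c} := by
          intro x hx
          obtain ⟨hx1, hx2, hx3⟩ := hx
          by_cases hxc : x = c
          · rw [if_pos hxc] at hx3; omega
          · rw [if_neg hxc] at hx3; exact ⟨hx1, hx2, by omega⟩
        have hfin : {n' | 1 ≤ n' ∧ n' ≤ N ∧ r n' < r c}.Finite :=
          Set.Finite.subset (Set.finite_Icc 1 N)
            (fun x hx => Set.mem_Icc.mpr ⟨hx.1, hx.2.1⟩)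
        calc {n' | 1 ≤ n' ∧ n' ≤ N ∧ (if n' = c then t else r n') < t}.ncard
            ≤ {n' | 1 ≤ n' ∧ n' ≤ N ∧ r n' < r c}.ncard := Set.ncard_le_ncard hsub hfin
          _ ≤ (c - 1) + m := hM.flex c hc1 hcN
          _ ≤ (n - 1) + (m + 1) := by omega
      · rw [if_neg hnc]
        have hfin : {n' | 1 ≤ n' ∧ n' ≤ N ∧ r n' < r n}.Finite :=
          Set.Finite.subset (Set.finite_Icc 1 N)
            (fun x hx => Set.mem_Icc.mpr ⟨hx.1, hx.2.1⟩)
        have hsub : {n' | 1 ≤ n' ∧ n' ≤ N ∧ (if n' = c then t else r n') < r n}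
            ⊆ {n' | 1 ≤ n' ∧ n' ≤ N ∧ r n' < r n} ∪ {c} := by
          intro x hx
          obtain ⟨hx1, hx2, hx3⟩ := hx
          by_cases hxc : x = c
          · exact Or.inr (by rw [hxc]; rfl)
          · rw [if_neg hxc] at hx3; exact Or.inl ⟨hx1, hx2, hx3⟩
        calc {n' | 1 ≤ n' ∧ n' ≤ N ∧ (if n' = c then t else r n') < r n}.ncard
            ≤ ({n' | 1 ≤ n' ∧ n' ≤ N ∧ r n' < r n} ∪ {c}).ncard :=
              Set.ncard_le_ncard hsub (hfin.union (Set.finite_singleton c))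
          _ ≤ {n' | 1 ≤ n' ∧ n' ≤ N ∧ r n' < r n}.ncard + ({c} : Set ℕ).ncard :=
              Set.ncard_union_le _ _
          _ = {n' | 1 ≤ n' ∧ n' ≤ N ∧ r n' < r n}.ncard + 1 := by
              rw [Set.ncard_singleton]
          _ ≤ (n - 1) + m + 1 := by
              have := hM.flex n h1 h2; omega
          _ = (n - 1) + (m + 1) := by omega
  · -- relocation count strictly decreases
    unfold relocCount
    apply Finset.card_lt_card
    rw [Finset.ssubset_iff_of_subset]
    · refine ⟨t, Finset.mem_filter.mpr ⟨Finset.mem_Icc.mpr ⟨ht1, htT⟩, by rw [hmv]; rfl⟩, ?_⟩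
      intro hmem
      have h2 : (newMv M t c i₀ t).isReloc = true := (Finset.mem_filter.mp hmem).2
      rw [newMv_t M t c i₀] at h2
      exact Bool.noConfusion h2
    · intro s hs
      rw [Finset.mem_filter] at hs ⊢
      obtain ⟨hicc, hr⟩ := hs
      refine ⟨hicc, ?_⟩
      have hr' : (newMv M t c i₀ s).isReloc = true := hr
      by_cases hlt : s < t
      · rwa [newMv_lt M t c i₀ s hlt] at hr'
      by_cases heq : s = t
      · rw [heq, newMv_t M t c i₀] at hr'
        exact absurd hr' (by simp [CRPMove.isReloc])
      · have hgt : t < s := by omega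
        by_cases hcmv : Cmove M c s
        · rw [newMv_gt_cm M t c i₀ s hgt hcmv] at hr'
          exact absurd hr' (by simp [CRPMove.isReloc])
        · rwa [newMv_gt M t c i₀ s hgt hcmv] at hr'
  · -- retrieval times do not increase
    intro n h1 h2
    show (if n = c then t else r n) ≤ r n
    by_cases hnc : n = c
    · rw [if_pos hnc, hnc]; omega
    · rw [if_neg hnc]
  · -- container c retrieved at time t
    show (if c = c then t else r c) = t
    rw [if_pos rfl]
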